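/- Let d ≥ 2 and let w be a permutation of {1,…,d}. Define w′ : {1,…,d−1} → ℕ recursively: w′(i) is the smallest element of the set {w(1), …, w(i+1)} \ {w′(1), …, w′(i−1)}. Then: (a) for every i, the set {w(1),…,w(i+1)} \ {w′(1),…,w′(i−1)} has exactly two elements, namely w(i+1) and max{w(1),…,w(i)}; consequently w′(i) = w(i+1) if w(i+1) < max{w(1),…,w(i)}, and w′(i) = max{w(1),…,w(i)} otherwise; and (b) w′ is a permutation of {1,…,d−1}. -/

import Mathlib

/-- `loserAux w i = [w′(1), …, w′(i)]`, the list of the first `i` values of the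
permutation of losers of `w`: `w′(i)` is the smallest element of
`{w(1),…,w(i+1)} \ {w′(1),…,w′(i−1)}`. -/
noncomputable def loserAux (w : ℕ → ℕ) : ℕ → List ℕ
  | 0 => []
  | i + 1 => loserAux w i ++
      [sInf {m : ℕ | (∃ k ∈ Finset.Icc 1 (i + 2), w k = m) ∧ m ∉ loserAux w i}]

/-- The permutation of losers of `w`: `loser w i = w′(i)` for `i ≥ 1`. -/
noncomputable def loser (w : ℕ → ℕ) (i : ℕ) : ℕ := (loserAux w i).getLastD 0

lemma loser_succ (w : ℕ → ℕ) (j : ℕ) :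
    loser w (j + 1)
      = sInf {m : ℕ | (∃ k ∈ Finset.Icc 1 (j + 2), w k = m) ∧ m ∉ loserAux w j} := by
  simp [loser, loserAux, List.getLastD_eq_getLast?]

lemma mem_loserAux (w : ℕ → ℕ) (j : ℕ) (m : ℕ) :
    m ∈ loserAux w j ↔ m ∈ (Finset.Icc 1 j).image (loser w) := by
  induction j with
  | zero => simp [loserAux]
  | succ j ih =>
    rw [← Finset.insert_Icc_right_eq_Icc_add_one (by omega : 1 ≤ j + 1)]
    rw [show loserAux w (j + 1) = loserAux w j ++ [loser w (j + 1)] by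
      rw [loser_succ]; rfl]
    simp only [List.mem_append, List.mem_singleton, Finset.image_insert,
      Finset.mem_insert, ih]
    tauto

lemma loser_main (d : ℕ) (hd : 2 ≤ d) (w : ℕ → ℕ)
    (hw : Set.BijOn w (Set.Icc 1 d) (Set.Icc 1 d)) :
    ∀ i, i ≤ d - 1 →
      ((Finset.Icc 1 i).image (loser w)
          = (Finset.Icc 1 (i + 1)).image w \ {(Finset.Icc 1 (i + 1)).sup w}) ∧
      (1 ≤ i →
        ((Finset.Icc 1 (i + 1)).image w \ (Finset.Icc 1 (i - 1)).image (loser w)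
            = {w (i + 1), (Finset.Icc 1 i).sup w} ∧
          w (i + 1) ≠ (Finset.Icc 1 i).sup w) ∧
        loser w i = if w (i + 1) < (Finset.Icc 1 i).sup w then w (i + 1)
          else (Finset.Icc 1 i).sup w) := by
  intro i
  induction i with
  | zero => intro _; simp
  | succ j ih =>
    intro hjd
    have ihP := (ih (by omega)).1
    set B : Finset ℕ := (Finset.Icc 1 (j + 1)).image w with hB
    set Mx : ℕ := (Finset.Icc 1 (j + 1)).sup w with hMx
    -- the running maximum is among the values so far
    have hMB : Mx ∈ B := by
      obtain ⟨k, hk, hke⟩ := Finset.exists_mem_eq_sup (Finset.Icc 1 (j + 1))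
        ⟨1, by simp⟩ w
      exact Finset.mem_image.2 ⟨k, hk, hke.symm⟩
    -- the newcomer is not among the values so far
    have hwB : w (j + 2) ∉ B := by
      intro hmem
      obtain ⟨k, hk, hke⟩ := Finset.mem_image.1 hmem
      rw [Finset.mem_Icc] at hk
      have : k = j + 2 := hw.injOn (by simp [Set.mem_Icc]; omega)
        (by simp [Set.mem_Icc]; omega) hke
      omega
    have hne : w (j + 2) ≠ Mx := fun h => hwB (h ▸ hMB)
    -- candidate set at step j+1 is the pair {w (j+2), Mx}
    have hins : (Finset.Icc 1 (j + 2)).image w = insert (w (j + 2)) B := by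
      rw [hB, show j + 2 = j + 1 + 1 from rfl, ← Finset.insert_Icc_right_eq_Icc_add_one (by omega : 1 ≤ j + 1 + 1),
        Finset.image_insert]
    have hdiff : (Finset.Icc 1 (j + 2)).image w \ (Finset.Icc 1 j).image (loser w)
        = {w (j + 2), Mx} := by
      rw [hins, ihP]
      ext x
      simp only [Finset.mem_sdiff, Finset.mem_insert, Finset.mem_singleton]
      constructor
      · rintro ⟨h1 | h1, h2⟩
        · exact Or.inl h1
        · right; by_contra hx; exact h2 ⟨h1, hx⟩
      · rintro (rfl | rfl)
        · exact ⟨Or.inl rfl, fun h => hwB h.1⟩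
        · exact ⟨Or.inr hMB, fun h => h.2 rfl⟩
    -- value of the loser at step j+1
    have hval : loser w (j + 1) = w (j + 2) ⊓ Mx := by
      rw [loser_succ]
      have hset : {m : ℕ | (∃ k ∈ Finset.Icc 1 (j + 2), w k = m) ∧ m ∉ loserAux w j}
          = {w (j + 2), Mx} := by
        ext m
        have h1 : ((∃ k ∈ Finset.Icc 1 (j + 2), w k = m) ∧ m ∉ loserAux w j)
            ↔ m ∈ (Finset.Icc 1 (j + 2)).image w \ (Finset.Icc 1 j).image (loser w) := by
          rw [Finset.mem_sdiff, Finset.mem_image, ← mem_loserAux]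
        rw [Set.mem_setOf_eq, h1, hdiff]
        simp
      rw [hset, csInf_pair]
    have hif : loser w (j + 1)
        = if w (j + 2) < Mx then w (j + 2) else Mx := by
      rw [hval]
      split_ifs with h
      · exact inf_eq_left.2 h.le
      · exact inf_eq_right.2 (by omega)
    refine ⟨?_, fun _ => ⟨⟨by simpa using hdiff, hne⟩, by simpa using hif⟩⟩
    -- the invariant at j+1
    have hsup : (Finset.Icc 1 (j + 2)).sup w = w (j + 2) ⊔ Mx := by
      rw [show j + 2 = j + 1 + 1 from rfl, ← Finset.insert_Icc_right_eq_Icc_add_one (by omega : 1 ≤ j + 1 + 1), Finset.sup_insert]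
    rw [← Finset.insert_Icc_right_eq_Icc_add_one (by omega : 1 ≤ j + 1), Finset.image_insert,
      ihP, hval, hins, hsup]
    rcases lt_or_gt_of_ne hne with h | h
    · rw [inf_eq_left.2 h.le, sup_eq_right.2 h.le]
      ext x
      simp only [Finset.mem_insert, Finset.mem_sdiff, Finset.mem_singleton]
      constructor
      · rintro (rfl | ⟨h1, h2⟩)
        · exact ⟨Or.inl rfl, fun hx => hne (hx ▸ rfl)⟩
        · exact ⟨Or.inr h1, h2⟩
      · rintro ⟨h1 | h1, h2⟩
        · exact Or.inl h1
        · exact Or.inr ⟨h1, h2⟩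
    · rw [inf_eq_right.2 h.le, sup_eq_left.2 h.le]
      ext x
      simp only [Finset.mem_insert, Finset.mem_sdiff, Finset.mem_singleton]
      constructor
      · rintro (rfl | ⟨h1, h2⟩)
        · exact ⟨Or.inr hMB, fun hx => hne hx.symm⟩
        · exact ⟨Or.inr h1, fun hx => hwB (hx ▸ h1)⟩
      · rintro ⟨h1 | h1, h2⟩
        · exact absurd h1 h2
        · by_cases hx : x = Mx
          · exact Or.inl hx
          · exact Or.inr ⟨h1, hx⟩

/-- For a permutation `w` of `{1,…,d}`: (a) for each `i ∈ {1,…,d−1}` the set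
`{w(1),…,w(i+1)} \ {w′(1),…,w′(i−1)}` has exactly two elements, namely
`w(i+1)` and `max{w(1),…,w(i)}`, and `w′(i)` equals `w(i+1)` if
`w(i+1) < max{w(1),…,w(i)}` and `max{w(1),…,w(i)}` otherwise; and (b) `w′`
is a permutation of `{1,…,d−1}`. -/
theorem loser_spec (d : ℕ) (hd : 2 ≤ d) (w : ℕ → ℕ)
    (hw : Set.BijOn w (Set.Icc 1 d) (Set.Icc 1 d)) :
    (∀ i ∈ Finset.Icc 1 (d - 1),
      ((Finset.Icc 1 (i + 1)).image w \ (Finset.Icc 1 (i - 1)).image (loser w)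
          = {w (i + 1), (Finset.Icc 1 i).sup w} ∧
        w (i + 1) ≠ (Finset.Icc 1 i).sup w) ∧
      loser w i = if w (i + 1) < (Finset.Icc 1 i).sup w then w (i + 1)
        else (Finset.Icc 1 i).sup w) ∧
    Set.BijOn (loser w) (Set.Icc 1 (d - 1)) (Set.Icc 1 (d - 1)) := by
  constructor
  · intro i hi
    rw [Finset.mem_Icc] at hi
    exact (loser_main d hd w hw i hi.2).2 hi.1
  · -- part (b)
    have hP := (loser_main d hd w hw (d - 1) le_rfl).1
    have hd1 : d - 1 + 1 = d := by omega
    rw [hd1] at hP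
    -- the image of w on Icc 1 d is Icc 1 d
    have himg : (Finset.Icc 1 d).image w = Finset.Icc 1 d := by
      apply Finset.coe_injective
      rw [Finset.coe_image, Finset.coe_Icc, hw.image_eq]
    -- the sup of w on Icc 1 d is d
    have hsup : (Finset.Icc 1 d).sup w = d := by
      apply le_antisymm
      · apply Finset.sup_le
        intro k hk
        have : w k ∈ Finset.Icc 1 d := himg ▸ Finset.mem_image_of_mem w hk
        exact (Finset.mem_Icc.1 this).2
      · have : d ∈ (Finset.Icc 1 d).image w := by
          rw [himg]; exact Finset.mem_Icc.2 (by omega)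
        obtain ⟨k, hk, hke⟩ := Finset.mem_image.1 this
        exact le_of_eq_of_le hke.symm (Finset.le_sup hk)
    have hkey : (Finset.Icc 1 (d - 1)).image (loser w) = Finset.Icc 1 (d - 1) := by
      rw [hP, himg, hsup]
      ext x
      simp only [Finset.mem_sdiff, Finset.mem_Icc, Finset.mem_singleton]
      omega
    have hinj : Set.InjOn (loser w) (Finset.Icc 1 (d - 1) : Finset ℕ) := by
      rw [← Finset.card_image_iff, hkey]
    rw [show Set.Icc 1 (d - 1) = ((Finset.Icc 1 (d - 1) : Finset ℕ) : Set ℕ) by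
      rw [Finset.coe_Icc]]
    refine ⟨?_, hinj, ?_⟩
    · intro x hx
      have : loser w x ∈ (Finset.Icc 1 (d - 1)).image (loser w) :=
        Finset.mem_image_of_mem _ (by exact_mod_cast hx)
      rw [hkey] at this
      exact_mod_cast this
    · intro y hy
      have : y ∈ (Finset.Icc 1 (d - 1)).image (loser w) := by
        rw [hkey]; exact_mod_cast hy
      obtain ⟨x, hx, hxe⟩ := Finset.mem_image.1 this
      exact ⟨x, by exact_mod_cast hx, hxe⟩
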